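/- For every c₀ ∈ ℂ, the function u(ρ) := c₀ ρ + (ρ/10) log(1−ρ²) + (1/(10ρ⁴)) log((1+ρ)/(1−ρ)) − (1/(5ρ⁴)) (ρ + ρ³/3 + ρ⁵/5) satisfies the ordinary differential equation u''(ρ) + (4/ρ) u'(ρ) − (4/ρ²) u(ρ) = −ρ/(1−ρ²) for all ρ ∈ (0,1). -/

import Mathlib

noncomputable section

/-- `u(ρ) = c₀ρ + (ρ/10)log(1−ρ²) + (1/(10ρ⁴))log((1+ρ)/(1−ρ)) − (1/(5ρ⁴))(ρ + ρ³/3 + ρ⁵/5)` -/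
def u12 (c₀ : ℂ) (ρ : ℝ) : ℂ :=
  c₀ * (ρ : ℂ) +
    (((ρ / 10) * Real.log (1 - ρ ^ 2) +
        (1 / (10 * ρ ^ 4)) * Real.log ((1 + ρ) / (1 - ρ)) -
        (1 / (5 * ρ ^ 4)) * (ρ + ρ ^ 3 / 3 + ρ ^ 5 / 5) : ℝ) : ℂ)

/-- real part of `u12`, with logs split. -/
def gg (ρ : ℝ) : ℝ :=
  ρ / 10 * (Real.log (1 + ρ) + Real.log (1 - ρ)) +
    1 / (10 * ρ ^ 4) * (Real.log (1 + ρ) - Real.log (1 - ρ)) -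
    1 / (5 * ρ ^ 4) * (ρ + ρ ^ 3 / 3 + ρ ^ 5 / 5)

/-- first derivative of `gg`. -/
def gg1 (ρ : ℝ) : ℝ :=
  (Real.log (1 + ρ) + Real.log (1 - ρ)) / 10 -
    2 * (Real.log (1 + ρ) - Real.log (1 - ρ)) / (5 * ρ ^ 5) +
    (ρ / 10 * (1 / (1 + ρ) - 1 / (1 - ρ)) +
      1 / (10 * ρ ^ 4) * (1 / (1 + ρ) + 1 / (1 - ρ)) -
      (1 + ρ ^ 2 + ρ ^ 4) / (5 * ρ ^ 4) +
      4 * (ρ + ρ ^ 3 / 3 + ρ ^ 5 / 5) / (5 * ρ ^ 5))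

/-- second derivative of `gg`. -/
def gg2 (ρ : ℝ) : ℝ :=
  2 * (Real.log (1 + ρ) - Real.log (1 - ρ)) / ρ ^ 6 +
    ((1 / (1 + ρ) - 1 / (1 - ρ)) / 5 -
      ρ / 10 * (1 / (1 + ρ) ^ 2 + 1 / (1 - ρ) ^ 2) -
      4 / (5 * ρ ^ 5) * (1 / (1 + ρ) + 1 / (1 - ρ)) +
      1 / (10 * ρ ^ 4) * (1 / (1 - ρ) ^ 2 - 1 / (1 + ρ) ^ 2) -
      (2 * ρ + 4 * ρ ^ 3) / (5 * ρ ^ 4) +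
      8 * (1 + ρ ^ 2 + ρ ^ 4) / (5 * ρ ^ 5) -
      4 * (ρ + ρ ^ 3 / 3 + ρ ^ 5 / 5) / ρ ^ 6)

lemma hgg1 {ρ : ℝ} (h0 : 0 < ρ) (h1 : ρ < 1) : HasDerivAt gg (gg1 ρ) ρ := by
  have ha : (1 : ℝ) + ρ ≠ 0 := by positivity
  have hb : (1 : ℝ) - ρ ≠ 0 := by nlinarith
  have hρ : ρ ≠ 0 := ne_of_gt h0
  have hA : HasDerivAt (fun x : ℝ => Real.log (1 + x)) (1 / (1 + ρ)) ρ := by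
    simpa using ((hasDerivAt_id ρ).const_add 1).log ha
  have hB : HasDerivAt (fun x : ℝ => Real.log (1 - x)) (-1 / (1 - ρ)) ρ := by
    simpa using ((hasDerivAt_id ρ).const_sub 1).log hb
  have h4 : HasDerivAt (fun x : ℝ => 10 * x ^ 4) (10 * (4 * ρ ^ 3)) ρ :=
    (hasDerivAt_pow 4 ρ).const_mul 10
  have h5 : HasDerivAt (fun x : ℝ => 5 * x ^ 4) (5 * (4 * ρ ^ 3)) ρ :=
    (hasDerivAt_pow 4 ρ).const_mul 5
  have h4n : 10 * ρ ^ 4 ≠ 0 := by positivity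
  have h5n : 5 * ρ ^ 4 ≠ 0 := by positivity
  have hT1 : HasDerivAt (fun x : ℝ => x / 10 * (Real.log (1 + x) + Real.log (1 - x)))
      (1 / 10 * (Real.log (1 + ρ) + Real.log (1 - ρ)) +
        ρ / 10 * (1 / (1 + ρ) + -1 / (1 - ρ))) ρ := by
    exact (((hasDerivAt_id ρ).div_const 10).mul (hA.add hB)).congr_deriv (by simp only [Pi.add_apply, Pi.sub_apply, id_eq])
  have hT2 : HasDerivAt (fun x : ℝ => 1 / (10 * x ^ 4) * (Real.log (1 + x) - Real.log (1 - x)))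
      ((0 * (10 * ρ ^ 4) - 1 * (10 * (4 * ρ ^ 3))) / (10 * ρ ^ 4) ^ 2 *
          (Real.log (1 + ρ) - Real.log (1 - ρ)) +
        1 / (10 * ρ ^ 4) * (1 / (1 + ρ) - -1 / (1 - ρ))) ρ :=
    ((hasDerivAt_const ρ (1 : ℝ)).div h4 h4n).mul (hA.sub hB)
  have hP : HasDerivAt (fun x : ℝ => x + x ^ 3 / 3 + x ^ 5 / 5)
      (1 + 3 * ρ ^ 2 / 3 + 5 * ρ ^ 4 / 5) ρ := by
    exact ((((hasDerivAt_id ρ).add ((hasDerivAt_pow 3 ρ).div_const 3)).add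
      ((hasDerivAt_pow 5 ρ).div_const 5))).congr_deriv (by norm_num)
  have hT3 : HasDerivAt (fun x : ℝ => 1 / (5 * x ^ 4) * (x + x ^ 3 / 3 + x ^ 5 / 5))
      ((0 * (5 * ρ ^ 4) - 1 * (5 * (4 * ρ ^ 3))) / (5 * ρ ^ 4) ^ 2 *
          (ρ + ρ ^ 3 / 3 + ρ ^ 5 / 5) +
        1 / (5 * ρ ^ 4) * (1 + 3 * ρ ^ 2 / 3 + 5 * ρ ^ 4 / 5)) ρ :=
    ((hasDerivAt_const ρ (1 : ℝ)).div h5 h5n).mul hP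
  have H := (hT1.add hT2).sub hT3
  refine H.congr_deriv ?_
  unfold gg1
  field_simp
  ring

lemma hgg2 {ρ : ℝ} (h0 : 0 < ρ) (h1 : ρ < 1) : HasDerivAt gg1 (gg2 ρ) ρ := by
  have ha0 : (0 : ℝ) < 1 + ρ := by linarith
  have hb0 : (0 : ℝ) < 1 - ρ := by linarith
  have ha : (1 : ℝ) + ρ ≠ 0 := ne_of_gt ha0
  have hb : (1 : ℝ) - ρ ≠ 0 := ne_of_gt hb0
  have hρ : ρ ≠ 0 := ne_of_gt h0
  have hA : HasDerivAt (fun x : ℝ => Real.log (1 + x)) (1 / (1 + ρ)) ρ := by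
    simpa using ((hasDerivAt_id ρ).const_add 1).log ha
  have hB : HasDerivAt (fun x : ℝ => Real.log (1 - x)) (-1 / (1 - ρ)) ρ := by
    simpa using ((hasDerivAt_id ρ).const_sub 1).log hb
  have hia : HasDerivAt (fun x : ℝ => 1 / (1 + x))
      ((0 * (1 + ρ) - 1 * 1) / (1 + ρ) ^ 2) ρ := by
    exact (hasDerivAt_const ρ (1 : ℝ)).div (by simpa using (hasDerivAt_id ρ).const_add 1) ha
  have hib : HasDerivAt (fun x : ℝ => 1 / (1 - x))
      ((0 * (1 - ρ) - 1 * (-1)) / (1 - ρ) ^ 2) ρ := by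
    exact (hasDerivAt_const ρ (1 : ℝ)).div (by simpa using (hasDerivAt_id ρ).const_sub 1) hb
  have h4 : HasDerivAt (fun x : ℝ => 10 * x ^ 4) (10 * (4 * ρ ^ 3)) ρ :=
    (hasDerivAt_pow 4 ρ).const_mul 10
  have h4' : HasDerivAt (fun x : ℝ => 5 * x ^ 4) (5 * (4 * ρ ^ 3)) ρ :=
    (hasDerivAt_pow 4 ρ).const_mul 5
  have h5 : HasDerivAt (fun x : ℝ => 5 * x ^ 5) (5 * (5 * ρ ^ 4)) ρ :=
    (hasDerivAt_pow 5 ρ).const_mul 5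
  have h4n : 10 * ρ ^ 4 ≠ 0 := by positivity
  have h4n' : 5 * ρ ^ 4 ≠ 0 := by positivity
  have h5n : 5 * ρ ^ 5 ≠ 0 := by positivity
  -- term 1 : (A + B)/10
  have hT1 : HasDerivAt (fun x : ℝ => (Real.log (1 + x) + Real.log (1 - x)) / 10)
      ((1 / (1 + ρ) + -1 / (1 - ρ)) / 10) ρ := (hA.add hB).div_const 10
  -- term 2 : 2*(A - B)/(5 x^5)
  have hT2 : HasDerivAt (fun x : ℝ => 2 * (Real.log (1 + x) - Real.log (1 - x)) / (5 * x ^ 5))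
      ((2 * (1 / (1 + ρ) - -1 / (1 - ρ)) * (5 * ρ ^ 5) -
          2 * (Real.log (1 + ρ) - Real.log (1 - ρ)) * (5 * (5 * ρ ^ 4))) /
        (5 * ρ ^ 5) ^ 2) ρ :=
    ((hA.sub hB).const_mul 2).div h5 h5n
  -- term 3 : x/10 * (1/(1+x) - 1/(1-x))
  have hT3 : HasDerivAt (fun x : ℝ => x / 10 * (1 / (1 + x) - 1 / (1 - x)))
      (1 / 10 * (1 / (1 + ρ) - 1 / (1 - ρ)) +
        ρ / 10 * ((0 * (1 + ρ) - 1 * 1) / (1 + ρ) ^ 2 -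
          (0 * (1 - ρ) - 1 * (-1)) / (1 - ρ) ^ 2)) ρ := by
    exact (((hasDerivAt_id ρ).div_const 10).mul (hia.sub hib)).congr_deriv (by simp only [Pi.add_apply, Pi.sub_apply, id_eq])
  -- term 4 : 1/(10 x^4) * (1/(1+x) + 1/(1-x))
  have hT4 : HasDerivAt (fun x : ℝ => 1 / (10 * x ^ 4) * (1 / (1 + x) + 1 / (1 - x)))
      ((0 * (10 * ρ ^ 4) - 1 * (10 * (4 * ρ ^ 3))) / (10 * ρ ^ 4) ^ 2 *
          (1 / (1 + ρ) + 1 / (1 - ρ)) +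
        1 / (10 * ρ ^ 4) *
          ((0 * (1 + ρ) - 1 * 1) / (1 + ρ) ^ 2 + (0 * (1 - ρ) - 1 * (-1)) / (1 - ρ) ^ 2)) ρ :=
    ((hasDerivAt_const ρ (1 : ℝ)).div h4 h4n).mul (hia.add hib)
  -- term 5 : (1 + x^2 + x^4)/(5 x^4)
  have hN : HasDerivAt (fun x : ℝ => 1 + x ^ 2 + x ^ 4) (2 * ρ + 4 * ρ ^ 3) ρ := by
    have := (((hasDerivAt_pow 2 ρ).const_add 1).add (hasDerivAt_pow 4 ρ))
    refine this.congr_deriv ?_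
    push_cast; ring
  have hT5 : HasDerivAt (fun x : ℝ => (1 + x ^ 2 + x ^ 4) / (5 * x ^ 4))
      (((2 * ρ + 4 * ρ ^ 3) * (5 * ρ ^ 4) - (1 + ρ ^ 2 + ρ ^ 4) * (5 * (4 * ρ ^ 3))) /
        (5 * ρ ^ 4) ^ 2) ρ := hN.div h4' h4n'
  -- term 6 : 4*(x + x^3/3 + x^5/5)/(5 x^5)
  have hP : HasDerivAt (fun x : ℝ => 4 * (x + x ^ 3 / 3 + x ^ 5 / 5))
      (4 * (1 + 3 * ρ ^ 2 / 3 + 5 * ρ ^ 4 / 5)) ρ := by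
    simpa using ((((hasDerivAt_id ρ).add ((hasDerivAt_pow 3 ρ).div_const 3)).add
      ((hasDerivAt_pow 5 ρ).div_const 5)).const_mul 4)
  have hT6 : HasDerivAt (fun x : ℝ => 4 * (x + x ^ 3 / 3 + x ^ 5 / 5) / (5 * x ^ 5))
      ((4 * (1 + 3 * ρ ^ 2 / 3 + 5 * ρ ^ 4 / 5) * (5 * ρ ^ 5) -
          4 * (ρ + ρ ^ 3 / 3 + ρ ^ 5 / 5) * (5 * (5 * ρ ^ 4))) / (5 * ρ ^ 5) ^ 2) ρ :=
    hP.div h5 h5n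
  have H := (hT1.sub hT2).add ((((hT3.add hT4).sub hT5).add hT6))
  refine H.congr_deriv ?_
  unfold gg2
  field_simp
  ring

/-- the complex lift of `gg` plus the linear term. -/
def vv (c₀ : ℂ) (x : ℝ) : ℂ := c₀ * (x : ℂ) + (gg x : ℂ)

def vv1 (c₀ : ℂ) (x : ℝ) : ℂ := c₀ + (gg1 x : ℂ)

lemma hvv1 (c₀ : ℂ) {ρ : ℝ} (h0 : 0 < ρ) (h1 : ρ < 1) :
    HasDerivAt (vv c₀) (vv1 c₀ ρ) ρ := by
  have h1' : HasDerivAt (fun y : ℝ => c₀ * (y : ℂ)) c₀ ρ := by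
    simpa using (Complex.ofRealCLM.hasDerivAt (x := ρ)).const_mul c₀
  exact h1'.add ((hgg1 h0 h1).ofReal_comp)

lemma hvv2 (c₀ : ℂ) {ρ : ℝ} (h0 : 0 < ρ) (h1 : ρ < 1) :
    HasDerivAt (vv1 c₀) ((gg2 ρ : ℂ)) ρ := by
  have := ((hgg2 h0 h1).ofReal_comp).const_add c₀
  exact this

lemma u12_eq_vv (c₀ : ℂ) {x : ℝ} (hx : x ∈ Set.Ioo (0 : ℝ) 1) : u12 c₀ x = vv c₀ x := by
  obtain ⟨h0, h1⟩ := hx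
  have ha : (1 : ℝ) + x ≠ 0 := by positivity
  have hb : (1 : ℝ) - x ≠ 0 := by nlinarith
  unfold u12 vv gg
  congr 2
  rw [show (1 : ℝ) - x ^ 2 = (1 + x) * (1 - x) by ring, Real.log_mul ha hb,
    Real.log_div ha hb]

/-- the function `u12 c₀` solves `u'' + (4/ρ)u' − (4/ρ²)u = −ρ/(1−ρ²)` on `(0,1)`. -/
theorem stmt_12 (c₀ : ℂ) :
    ∀ ρ ∈ Set.Ioo (0 : ℝ) 1,
      deriv (deriv (u12 c₀)) ρ + (4 / (ρ : ℂ)) * deriv (u12 c₀) ρ -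
          (4 / (ρ : ℂ) ^ 2) * u12 c₀ ρ =
        -((ρ : ℂ) / (1 - (ρ : ℂ) ^ 2)) := by
  intro ρ hρ
  obtain ⟨h0, h1⟩ := hρ
  have hmem : Set.Ioo (0 : ℝ) 1 ∈ nhds ρ := Ioo_mem_nhds h0 h1
  have huv : u12 c₀ =ᶠ[nhds ρ] vv c₀ := by
    filter_upwards [hmem] with x hx
    exact u12_eq_vv c₀ hx
  have hd1 : deriv (u12 c₀) =ᶠ[nhds ρ] vv1 c₀ := by
    filter_upwards [hmem, huv.deriv] with x hx hdx
    · rw [hdx]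
      exact (hvv1 c₀ hx.1 hx.2).deriv
  have hu' : deriv (u12 c₀) ρ = vv1 c₀ ρ := hd1.self_of_nhds
  have hu'' : deriv (deriv (u12 c₀)) ρ = (gg2 ρ : ℂ) := by
    rw [hd1.deriv_eq]
    exact (hvv2 c₀ h0 h1).deriv
  rw [hu', hu'', u12_eq_vv c₀ ⟨h0, h1⟩]
  -- now a pure algebraic identity
  have ha : (1 : ℝ) + ρ ≠ 0 := by positivity
  have hb : (1 : ℝ) - ρ ≠ 0 := by nlinarith
  have hρ : ρ ≠ 0 := ne_of_gt h0
  have hereal : gg2 ρ + 4 / ρ * gg1 ρ - 4 / ρ ^ 2 * gg ρ = -(ρ / (1 - ρ ^ 2)) := by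
    unfold gg gg1 gg2
    rw [show (1 : ℝ) - ρ ^ 2 = (1 + ρ) * (1 - ρ) by ring]
    field_simp
    ring
  have hcρ : (ρ : ℂ) ≠ 0 := Complex.ofReal_ne_zero.mpr hρ
  unfold vv vv1
  have hthis := congrArg (fun t : ℝ => (t : ℂ)) hereal
  push_cast at hthis
  have hz : (4 / (ρ : ℂ) ^ 2) * (c₀ * ρ) = (4 / (ρ : ℂ)) * c₀ := by
    field_simp
  calc ((gg2 ρ : ℂ)) + 4 / (ρ : ℂ) * (c₀ + (gg1 ρ : ℂ)) -
        4 / (ρ : ℂ) ^ 2 * (c₀ * (ρ : ℂ) + (gg ρ : ℂ))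
      = (((gg2 ρ : ℂ)) + 4 / (ρ : ℂ) * (gg1 ρ : ℂ) - 4 / (ρ : ℂ) ^ 2 * (gg ρ : ℂ)) +
        ((4 / (ρ : ℂ)) * c₀ - 4 / (ρ : ℂ) ^ 2 * (c₀ * (ρ : ℂ))) := by ring
    _ = -((ρ : ℂ) / (1 - (ρ : ℂ) ^ 2)) := by rw [hz, hthis]; ring

end
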